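/- arXiv:1311.5277 — 5 statements merged into one kernel-verified Lean document; each statement's English description precedes it below -/
import Mathlib

section
/- Let λ be a real number with |λ| > 2, and let ρ be the root of t² − λ·t + 1 = 0 of absolute value strictly less than 1 (explicitly, ρ = (λ − √(λ² − 4))/2 if λ > 2 and ρ = (λ + √(λ² − 4))/2 if λ < −2). If (x_n)_{n∈ℕ} is a square-summable sequence of complex numbers satisfying x_{n+2} = λ·x_{n+1} − x_n for all n ∈ ℕ, then x_n = x_0·ρⁿ for all n ∈ ℕ. -/
/-- Let `λ` be real with `|λ| > 2` and let `ρ` be the root of `t² − λt + 1 = 0` of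
absolute value less than 1 (explicitly `ρ = (λ − √(λ²−4))/2` if `λ > 2` and
`ρ = (λ + √(λ²−4))/2` if `λ < −2`).  If `(x_n)` is a square-summable sequence of
complex numbers satisfying `x_{n+2} = λ x_{n+1} − x_n` for all `n`, then
`x_n = x_0 ρⁿ` for all `n`. -/
theorem stmt0 (lam : ℝ) (hlam : 2 < |lam|) (ρ : ℝ)
    (hρ : ρ = if 2 < lam then (lam - Real.sqrt (lam ^ 2 - 4)) / 2
              else (lam + Real.sqrt (lam ^ 2 - 4)) / 2)
    (x : ℕ → ℂ) (hx : Summable fun n : ℕ => ‖x n‖ ^ 2)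
    (hrec : ∀ n : ℕ, x (n + 2) = (lam : ℂ) * x (n + 1) - x n) :
    ∀ n : ℕ, x n = x 0 * (ρ : ℂ) ^ n := by
  have h4 : (4:ℝ) ≤ lam ^ 2 := by nlinarith [sq_abs lam, abs_nonneg lam]
  have s_nonneg : 0 ≤ Real.sqrt (lam ^ 2 - 4) := Real.sqrt_nonneg _
  have hs : Real.sqrt (lam ^ 2 - 4) ^ 2 = lam ^ 2 - 4 := Real.sq_sqrt (by linarith)
  set s := Real.sqrt (lam ^ 2 - 4) with hsdef
  set σ : ℝ := lam - ρ with hσdef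
  have hprod : ρ * σ = 1 := by
    rcases lt_or_ge 2 lam with h | h
    · rw [hσdef, hρ, if_pos h]; nlinarith
    · rw [hσdef, hρ, if_neg (not_lt.2 h)]; nlinarith
  have hσ1 : 1 < |σ| := by
    rcases lt_or_ge 2 lam with h | h
    · have hσval : σ = (lam + s) / 2 := by rw [hσdef, hρ, if_pos h]; ring
      rw [hσval, abs_of_pos (by linarith)]; linarith
    · have hl : lam < -2 := by
        rcases lt_abs.mp hlam with h' | h' <;> linarith
      have hσval : σ = (lam - s) / 2 := by rw [hσdef, hρ, if_neg (not_lt.2 h)]; ring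
      rw [hσval, abs_of_neg (by linarith)]; linarith
  have hpc : (ρ : ℂ) * ((lam : ℂ) - ρ) = 1 := by exact_mod_cast hprod
  set y : ℕ → ℂ := fun n => x (n + 1) - (ρ : ℂ) * x n with hy
  have hσc : (σ : ℂ) = (lam : ℂ) - ρ := by rw [hσdef]; push_cast; ring
  have hrecy : ∀ n, y (n + 1) = (σ : ℂ) * y n := by
    intro n
    simp only [hy]
    rw [hrec n, hσc]
    linear_combination (x n) * hpc
  have hgen : ∀ n, y n = (σ : ℂ) ^ n * y 0 := by
    intro n
    induction n with
    | zero => simp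
    | succ k ih => rw [hrecy k, ih, pow_succ]; ring
  -- x tends to 0
  have hx0 : Filter.Tendsto x Filter.atTop (nhds 0) := by
    rw [tendsto_zero_iff_norm_tendsto_zero]
    have h1 : Filter.Tendsto (fun n => ‖x n‖ ^ 2) Filter.atTop (nhds 0) :=
      hx.tendsto_atTop_zero
    have h2 := (Real.continuous_sqrt.tendsto 0).comp h1
    simpa [Function.comp_def, Real.sqrt_sq (norm_nonneg _)] using h2
  have hy0 : Filter.Tendsto y Filter.atTop (nhds 0) := by
    have hx1 : Filter.Tendsto (fun n => x (n + 1)) Filter.atTop (nhds 0) :=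
      hx0.comp (Filter.tendsto_add_atTop_nat 1)
    have := hx1.sub (hx0.const_mul (ρ : ℂ))
    simpa using this
  have hy00 : y 0 = 0 := by
    have hlb : ∀ n, ‖y 0‖ ≤ ‖y n‖ := by
      intro n
      rw [hgen n, norm_mul, norm_pow, Complex.norm_real, Real.norm_eq_abs]
      have h1 : (1:ℝ) ≤ |σ| ^ n := one_le_pow₀ hσ1.le
      nlinarith [norm_nonneg (y 0)]
    have hn : Filter.Tendsto (fun n => ‖y n‖) Filter.atTop (nhds 0) := by
      simpa using hy0.norm
    exact norm_le_zero_iff.mp (ge_of_tendsto' hn hlb)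
  have hstep : ∀ n, x (n + 1) = (ρ : ℂ) * x n := by
    intro n
    have := hgen n
    rw [hy00, mul_zero] at this
    simp only [hy] at this
    linear_combination this
  intro n
  induction n with
  | zero => simp
  | succ k ih => rw [hstep k, ih, pow_succ]; ring
end

section
/- Let δ > 1 be real and y = s + s* − δ^{−1/2} e. Every eigenvalue of y has absolute value at most 2: if λ ∈ ℂ, ξ ∈ H, ξ ≠ 0, and y ξ = λ ξ, then |λ| ≤ 2. -/
open ContinuousLinearMap

noncomputable section

/-- The Hilbert space `ℓ²(ℕ, ℂ)`. -/
abbrev H : Type := lp (fun _ : ℕ => ℂ) 2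

/-- The standard orthonormal basis of `ℓ²(ℕ, ℂ)`. -/
def ξ (n : ℕ) : H := lp.single 2 n 1

/-- If `δ > 1`, `s` is the unilateral shift on `ℓ²(ℕ,ℂ)` and `e` is the orthogonal
projection onto the span of `ξ 0`, then every eigenvalue of
`y = s + s* − δ^{-1/2} e` has absolute value at most `2`. -/
theorem stmt1 (δ : ℝ) (hδ : 1 < δ) (s e : H →L[ℂ] H)
    (hs : ∀ n : ℕ, s (ξ n) = ξ (n + 1))
    (he : ∀ v : H, e v = (inner ℂ (ξ 0) v : ℂ) • ξ 0)
    (lam : ℂ) (v : H) (hv : v ≠ 0)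
    (heig : (s + adjoint s - (((Real.sqrt δ)⁻¹ : ℝ) : ℂ) • e) v = lam • v) :
    ‖lam‖ ≤ 2 := by
  set t : ℝ := (Real.sqrt δ)⁻¹ with ht
  -- coordinates
  set a : ℕ → ℂ := fun n => v n with ha
  have hinner : ∀ (n : ℕ) (w : H), (inner ℂ (ξ n) w : ℂ) = w n := by
    intro n w
    simp [ξ, lp.inner_single_left]
  -- t bounds
  have hsqrt : 1 < Real.sqrt δ := by
    have h := Real.sqrt_lt_sqrt (by norm_num) hδ
    simpa using h
  have ht01 : 0 < t ∧ t < 1 := ⟨by positivity, by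
    rw [ht]; exact inv_lt_one_of_one_lt₀ hsqrt⟩
  -- coordinate equations
  have key : ∀ n : ℕ, (inner ℂ (ξ n) ((s + adjoint s - (t : ℂ) • e) v) : ℂ) = lam * a n := by
    intro n
    rw [heig, inner_smul_right, hinner]
  have hsv : ∀ n : ℕ, (inner ℂ (ξ n) (s v) : ℂ) = if n = 0 then 0 else a (n - 1) := by
    intro n
    rw [← adjoint_inner_left]
    -- compute adjoint s (ξ n)
    have hadj : adjoint s (ξ n) = if n = 0 then 0 else ξ (n - 1) := by
      apply lp.ext
      funext m
      have h1 : (adjoint s (ξ n)) m = (inner ℂ (ξ m) (adjoint s (ξ n)) : ℂ) := (hinner m _).symm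
      rw [h1, adjoint_inner_right, hs, hinner]
      rcases n with _ | k
      · simp [ξ, lp.single_apply]
      · simp only [Nat.succ_ne_zero, if_neg, Nat.succ_sub_one]
        simp [ξ, lp.single_apply, Pi.single_apply, eq_comm]
    rw [hadj]
    rcases n with _ | k
    · simp
    · simp [hinner, ha]
  have hadjv : ∀ n : ℕ, (inner ℂ (ξ n) (adjoint s v) : ℂ) = a (n + 1) := by
    intro n
    rw [adjoint_inner_right, hs, hinner]
  have hev : ∀ n : ℕ, (inner ℂ (ξ n) (e v) : ℂ) = if n = 0 then a 0 else 0 := by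
    intro n
    rw [he, inner_smul_right, hinner 0 v]
    have : (inner ℂ (ξ n) (ξ 0) : ℂ) = if n = 0 then 1 else 0 := by
      simp [ξ, lp.inner_single_left, lp.single_apply, Pi.single_apply]
    rw [this]
    split_ifs <;> ring
  -- the two equations
  have eq0 : a 1 - (t : ℂ) * a 0 = lam * a 0 := by
    have := key 0
    simp only [ContinuousLinearMap.sub_apply, ContinuousLinearMap.add_apply,
      ContinuousLinearMap.smul_apply, inner_sub_right, inner_add_right,
      inner_smul_right] at this
    rw [hsv 0, hadjv 0, hev 0] at this
    simpa using this
  have eqn : ∀ k : ℕ, a k + a (k + 2) = lam * a (k + 1) := by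
    intro k
    have := key (k + 1)
    simp only [ContinuousLinearMap.sub_apply, ContinuousLinearMap.add_apply,
      ContinuousLinearMap.smul_apply, inner_sub_right, inner_add_right,
      inner_smul_right] at this
    rw [hsv (k+1), hadjv (k+1), hev (k+1)] at this
    simpa using this
  -- a 0 ≠ 0
  have ha0 : a 0 ≠ 0 := by
    intro h0
    have h1 : a 1 = 0 := by
      have := eq0; rw [h0] at this; simpa using this
    have hall : ∀ n, a n = 0 := by
      intro n
      induction n using Nat.strong_induction_on with
      | _ n ih =>
        match n with
        | 0 => exact h0
        | 1 => exact h1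
        | (k + 2) =>
          have := eqn k
          rw [ih k (by omega), ih (k+1) (by omega)] at this
          simpa using this
    apply hv
    apply lp.ext
    funext n
    exact hall n
  -- main contradiction
  by_contra hlam
  push_neg at hlam
  set c : ℝ := ‖lam‖ - 1 with hc
  have hc1 : 1 < c := by simp [hc]; linarith
  have step : ∀ n : ℕ, c * ‖a n‖ ≤ ‖a (n + 1)‖ := by
    intro n
    induction n with
    | zero =>
      have h1 : a 1 = (lam + (t : ℂ)) * a 0 := by linear_combination eq0
      rw [h1, norm_mul]
      have habs : ‖lam‖ - t ≤ ‖lam + (t:ℂ)‖ := by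
        have h2 : ‖lam + (t:ℂ)‖ ≥ ‖lam‖ - ‖(t:ℂ)‖ := by
          have := norm_sub_norm_le lam (-(t:ℂ))
          simpa [sub_neg_eq_add] using this
        have h3 : ‖(t:ℂ)‖ = t := by
          rw [Complex.norm_real, Real.norm_eq_abs, abs_of_pos ht01.1]
        rw [h3] at h2
        linarith
      have hn0 : (0:ℝ) ≤ ‖a 0‖ := norm_nonneg _
      have : c ≤ ‖lam + (t:ℂ)‖ := by
        simp only [hc]; linarith [ht01.2]
      nlinarith
    | succ k ih =>
      have h2 : a (k + 2) = lam * a (k + 1) - a k := by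
        have := eqn k; linear_combination this
      rw [h2]
      have h3 : ‖lam * a (k+1)‖ - ‖a k‖ ≤ ‖lam * a (k+1) - a k‖ := by
        simpa using norm_sub_norm_le (lam * a (k+1)) (a k)
      rw [norm_mul] at h3
      have h4 : ‖a k‖ ≤ ‖a (k+1)‖ := by
        have hn : 0 ≤ ‖a k‖ := norm_nonneg _
        nlinarith
      have h5 : c * ‖a (k+1)‖ = ‖lam‖ * ‖a (k+1)‖ - ‖a (k+1)‖ := by
        rw [hc]; ring
      linarith
  have growth : ∀ n : ℕ, c ^ n * ‖a 0‖ ≤ ‖a n‖ := by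
    intro n
    induction n with
    | zero => simp
    | succ k ih =>
      calc c ^ (k+1) * ‖a 0‖ = c * (c ^ k * ‖a 0‖) := by ring
        _ ≤ c * ‖a k‖ := by
            apply mul_le_mul_of_nonneg_left ih (by linarith)
        _ ≤ ‖a (k+1)‖ := step k
  -- boundedness
  have hbound : ∀ n, ‖a n‖ ≤ ‖v‖ := by
    intro n
    have := lp.norm_apply_le_norm (by norm_num : (2 : ENNReal) ≠ 0) v n
    simpa [ha] using this
  obtain ⟨n, hn⟩ := pow_unbounded_of_one_lt (‖v‖ / ‖a 0‖) hc1
  have hpos : 0 < ‖a 0‖ := by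
    simpa [norm_pos_iff] using ha0
  have : ‖v‖ < c ^ n * ‖a 0‖ := by
    rw [div_lt_iff₀ hpos] at hn
    linarith
  linarith [growth n, hbound n]
end
end

section
/- Let δ > 1 be real and y = s + s* − δ^{−1/2} e. Then the spectrum of y equals the spectrum of s + s*: spec(y) = spec(s + s*). -/
set_option maxHeartbeats 1000000


open ContinuousLinearMap

noncomputable section

open scoped InnerProductSpace
open Complex

lemma xi_apply (n m : ℕ) : (ξ n) m = if m = n then 1 else 0 := by
  rw [ξ, lp.single_apply]; split_ifs with h
  · subst h; simp
  · simp [h]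

lemma inner_xi (m : ℕ) (v : H) : ⟪ξ m, v⟫_ℂ = v m := by
  simpa [ξ] using lp.inner_single_left (𝕜 := ℂ) m (1:ℂ) v

lemma coord_adj (s : H →L[ℂ] H) (hs : ∀ n : ℕ, s (ξ n) = ξ (n + 1)) (v : H) (m : ℕ) :
    (adjoint s v) m = v (m + 1) := by
  rw [← inner_xi, ContinuousLinearMap.adjoint_inner_right, hs, inner_xi]

lemma adj_xi_zero (s : H →L[ℂ] H) (hs : ∀ n : ℕ, s (ξ n) = ξ (n + 1)) :
    adjoint s (ξ 0) = 0 := by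
  apply lp.ext; funext m
  rw [coord_adj s hs, xi_apply]
  simp

lemma adj_xi_succ (s : H →L[ℂ] H) (hs : ∀ n : ℕ, s (ξ n) = ξ (n + 1)) (n : ℕ) :
    adjoint s (ξ (n+1)) = ξ n := by
  apply lp.ext; funext m
  rw [coord_adj s hs, xi_apply, xi_apply]
  simp

lemma coord_s_zero (s : H →L[ℂ] H) (hs : ∀ n : ℕ, s (ξ n) = ξ (n + 1)) (v : H) :
    (s v) 0 = 0 := by
  rw [← inner_xi, ← adjoint_adjoint s, ContinuousLinearMap.adjoint_inner_right,
    adj_xi_zero s hs]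
  simp

lemma coord_s_succ (s : H →L[ℂ] H) (hs : ∀ n : ℕ, s (ξ n) = ξ (n + 1)) (v : H) (m : ℕ) :
    (s v) (m+1) = v m := by
  rw [← inner_xi, ← adjoint_adjoint s, ContinuousLinearMap.adjoint_inner_right,
    adj_xi_succ s hs, inner_xi]

lemma summable_sq (v : H) : Summable fun i => ‖v i‖^2 := by
  have h := (lp.memℓp v).summable (p := 2) (by norm_num)
  simp only [ENNReal.toReal_ofNat, Real.rpow_two] at h
  exact h

lemma summable_sq_succ (v : H) : Summable fun i => ‖v (i+1)‖^2 :=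
  (summable_sq v).comp_injective fun a b h => by omega

lemma norm_sq_eq (v : H) : ‖v‖^2 = ∑' i, ‖v i‖^2 := by
  have h := lp.norm_rpow_eq_tsum (p := 2) (by norm_num) v
  simp only [ENNReal.toReal_ofNat, Real.rpow_two] at h
  exact h

lemma tsum_sq_succ (v : H) : ∑' i, ‖v (i+1)‖^2 = (∑' i, ‖v i‖^2) - ‖v 0‖^2 := by
  have := (summable_sq v).tsum_eq_zero_add
  linarith [this]

lemma quad_bound (s e : H →L[ℂ] H) (hs : ∀ n : ℕ, s (ξ n) = ξ (n + 1))
    (he : ∀ v : H, e v = (inner ℂ (ξ 0) v : ℂ) • ξ 0) (c : ℝ) (hc0 : 0 ≤ c) (hc1 : c ≤ 1)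
    (v : H) : |(⟪(s + adjoint s - (c:ℂ) • e) v, v⟫_ℂ).re| ≤ 2 * ‖v‖^2 := by
  set z : ℕ → ℂ := fun i => (starRingEnd ℂ) (v i) * v (i+1) with hzdef
  set g : ℕ → ℝ := fun i => 2 * (z i).re with hgdef
  have hS := summable_sq v
  have hS1 := summable_sq_succ v
  -- summability of z and g
  have hznorm : ∀ i, ‖z i‖ ≤ ‖v i‖^2 + ‖v (i+1)‖^2 := by
    intro i
    have : ‖z i‖ = ‖v i‖ * ‖v (i+1)‖ := by
      simp [hzdef, norm_mul]
    rw [this]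
    nlinarith [norm_nonneg (v i), norm_nonneg (v (i+1)), sq_nonneg (‖v i‖ - ‖v (i+1)‖)]
  have hz : Summable z := Summable.of_norm_bounded (hS.add hS1) hznorm
  have hzc : Summable fun i => (starRingEnd ℂ) (z i) :=
    (hz.map (starRingEnd ℂ) continuous_conj)
  have hg : Summable g := by
    have := hz.mapL Complex.reCLM
    simpa [hgdef] using this.mul_left 2
  -- inner product expansions
  have h1 : ⟪s v, v⟫_ℂ = ∑' i, z i := by
    have e1 : ⟪s v, v⟫_ℂ = ∑' i, (starRingEnd ℂ) ((s v) i) * v i := by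
      rw [lp.inner_eq_tsum]; exact tsum_congr fun i => by rw [RCLike.inner_apply]; ring
    have hsum : Summable fun i => (starRingEnd ℂ) ((s v) i) * v i := by
      have := lp.summable_inner (𝕜 := ℂ) (s v) v
      exact this.congr fun i => by rw [RCLike.inner_apply]; ring
    rw [e1, hsum.tsum_eq_zero_add, coord_s_zero s hs]
    simp only [map_zero, zero_mul, zero_add]
    exact tsum_congr fun i => by rw [coord_s_succ s hs]
  have h2 : ⟪adjoint s v, v⟫_ℂ = ∑' i, (starRingEnd ℂ) (z i) := by
    have e1 : ⟪adjoint s v, v⟫_ℂ = ∑' i, (starRingEnd ℂ) ((adjoint s v) i) * v i := by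
      rw [lp.inner_eq_tsum]; exact tsum_congr fun i => by rw [RCLike.inner_apply]; ring
    rw [e1]
    exact tsum_congr fun i => by rw [coord_adj s hs]; simp [hzdef]; ring
  have h3 : ⟪e v, v⟫_ℂ = ((‖v 0‖^2 : ℝ) : ℂ) := by
    rw [he, inner_smul_left, inner_xi]
    rw [← Complex.normSq_eq_conj_mul_self, Complex.normSq_eq_norm_sq]
  have hre : (⟪(s + adjoint s - (c:ℂ) • e) v, v⟫_ℂ).re = (∑' i, g i) - c * ‖v 0‖^2 := by
    have expand : ⟪(s + adjoint s - (c:ℂ) • e) v, v⟫_ℂ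
        = ⟪s v, v⟫_ℂ + ⟪adjoint s v, v⟫_ℂ - (starRingEnd ℂ) ((c:ℝ):ℂ) * ⟪e v, v⟫_ℂ := by
      rw [ContinuousLinearMap.sub_apply, ContinuousLinearMap.add_apply,
        ContinuousLinearMap.smul_apply, inner_sub_left, inner_add_left, inner_smul_left]
    rw [expand, h1, h2, h3, ← hz.tsum_add hzc, Complex.conj_ofReal]
    have : (∑' i, (z i + (starRingEnd ℂ) (z i))).re = ∑' i, g i := by
      rw [Complex.re_tsum (hz.add hzc)]
      exact tsum_congr fun i => by
        simp only [hgdef, Complex.add_re, Complex.conj_re]; ring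
    rw [Complex.sub_re, this, ← Complex.ofReal_mul, Complex.ofReal_re]
  rw [hre, norm_sq_eq v]
  set A := ∑' i, ‖v i‖^2 with hAdef
  have hA0 : (0:ℝ) ≤ ‖v 0‖^2 := sq_nonneg _
  have hAv0 : ‖v 0‖^2 ≤ A := by
    have := tsum_sq_succ v
    have h1 : (0:ℝ) ≤ ∑' i, ‖v (i+1)‖^2 := tsum_nonneg fun i => sq_nonneg _
    linarith
  -- upper bound on ∑ g
  have hup : (∑' i, g i) ≤ 2 * A - ‖v 0‖^2 := by
    have hle : ∀ i, g i ≤ ‖v i‖^2 + ‖v (i+1)‖^2 := by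
      intro i
      have h1 : (z i).re ≤ ‖v i‖ * ‖v (i+1)‖ := by
        calc (z i).re ≤ ‖z i‖ := Complex.re_le_norm _
        _ = ‖v i‖ * ‖v (i+1)‖ := by
            simp [hzdef]
      have := two_mul_le_add_sq ‖v i‖ ‖v (i+1)‖
      simp only [hgdef]
      nlinarith
    calc (∑' i, g i) ≤ ∑' i, (‖v i‖^2 + ‖v (i+1)‖^2) := Summable.tsum_le_tsum hle hg (hS.add hS1)
    _ = A + ((∑' i, ‖v i‖^2) - ‖v 0‖^2) := by rw [hS.tsum_add hS1, tsum_sq_succ v]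
    _ = 2 * A - ‖v 0‖^2 := by ring
  -- lower bound on ∑ g
  have hptwise : ∀ i, g i = ‖v i + v (i+1)‖^2 - (‖v i‖^2 + ‖v (i+1)‖^2) := by
    intro i
    have h1 : ‖v i + v (i+1)‖^2 = Complex.normSq (v i + v (i+1)) := by
      rw [Complex.sq_norm]
    have h2 : ‖v i‖^2 = Complex.normSq (v i) := by rw [Complex.sq_norm]
    have h3 : ‖v (i+1)‖^2 = Complex.normSq (v (i+1)) := by
      rw [Complex.sq_norm]
    have h4 := Complex.normSq_add (v i) (v (i+1))
    have h5 : ((v i) * (starRingEnd ℂ) (v (i+1))).re = (z i).re := by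
      have hzz : z i = (starRingEnd ℂ) ((v i) * (starRingEnd ℂ) (v (i+1))) := by
        simp only [hzdef, map_mul, Complex.conj_conj]
      rw [hzz, Complex.conj_re]
    simp only [hgdef]
    rw [h1, h2, h3, h4, h5]
    ring
  have hP : Summable fun i => ‖v i + v (i+1)‖^2 := by
    apply ((hS.add hS1).add hg).congr
    intro i
    have := hptwise i
    simp only [Pi.add_apply]
    linarith
  have hgl : (∑' i, g i) = (∑' i, ‖v i + v (i+1)‖^2) - (A + (A - ‖v 0‖^2)) := by
    rw [tsum_congr hptwise, hP.tsum_sub (hS.add hS1), hS.tsum_add hS1, tsum_sq_succ v]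
  have hPnn : (0:ℝ) ≤ ∑' i, ‖v i + v (i+1)‖^2 := tsum_nonneg fun i => sq_nonneg _
  have hcm : c * ‖v 0‖^2 ≤ ‖v 0‖^2 := by nlinarith
  have hcm0 : (0:ℝ) ≤ c * ‖v 0‖^2 := mul_nonneg hc0 hA0
  rw [abs_le]
  constructor <;> linarith

lemma spec_subset (T : H →L[ℂ] H) (hT : IsSelfAdjoint T)
    (hb : ∀ v : H, |(⟪T v, v⟫_ℂ).re| ≤ 2 * ‖v‖^2) :
    spectrum ℂ T ⊆ (fun t : ℝ => (t:ℂ)) '' Set.Icc (-2) 2 := by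
  intro w hw
  have hre := hT.mem_spectrum_eq_re hw
  refine ⟨w.re, ⟨?_, ?_⟩, hre.symm⟩
  · by_contra hlt
    push_neg at hlt
    apply spectrum.mem_iff.mp hw
    have hunit : IsUnit (T - algebraMap ℂ (H →L[ℂ] H) w) := by
      apply isUnit_of_forall_le_norm_inner_map _ (c := ⟨-2 - w.re, by linarith⟩)
      · apply NNReal.coe_pos.mp
        show (0:ℝ) < -2 - w.re
        linarith
      · intro u
        have h2 : |(⟪T u, u⟫_ℂ).re| ≤ 2 * ‖u‖^2 := hb u
        have h3 : (⟪(T - algebraMap ℂ (H →L[ℂ] H) w) u, u⟫_ℂ).re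
            = (⟪T u, u⟫_ℂ).re - w.re * ‖u‖^2 := by
          rw [ContinuousLinearMap.sub_apply, inner_sub_left, Complex.sub_re,
            Algebra.algebraMap_eq_smul_one, ContinuousLinearMap.smul_apply,
            ContinuousLinearMap.one_apply, inner_smul_left]
          congr 1
          rw [hre, Complex.conj_ofReal, Complex.ofReal_re, Complex.re_ofReal_mul]
          congr 1
          rw [← RCLike.re_to_complex]
          exact inner_self_eq_norm_sq u
        calc ‖u‖^2 * ((⟨-2 - w.re, by linarith⟩ : NNReal) : ℝ)
            = (-2 - w.re) * ‖u‖^2 := by push_cast; ring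
          _ ≤ (⟪T u, u⟫_ℂ).re - w.re * ‖u‖^2 := by
              have := abs_le.mp h2
              nlinarith [sq_nonneg ‖u‖]
          _ = (⟪(T - algebraMap ℂ (H →L[ℂ] H) w) u, u⟫_ℂ).re := h3.symm
          _ ≤ ‖⟪(T - algebraMap ℂ (H →L[ℂ] H) w) u, u⟫_ℂ‖ := Complex.re_le_norm _
    have := hunit.neg
    simpa [neg_sub] using this
  · by_contra hlt
    push_neg at hlt
    apply spectrum.mem_iff.mp hw
    apply isUnit_of_forall_le_norm_inner_map _ (c := ⟨w.re - 2, by linarith⟩)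
    · apply NNReal.coe_pos.mp
      show (0:ℝ) < w.re - 2
      linarith
    · intro u
      have h2 := abs_le.mp (hb u)
      have h3 : (⟪(algebraMap ℂ (H →L[ℂ] H) w - T) u, u⟫_ℂ).re
          = w.re * ‖u‖^2 - (⟪T u, u⟫_ℂ).re := by
        rw [ContinuousLinearMap.sub_apply, inner_sub_left, Complex.sub_re,
          Algebra.algebraMap_eq_smul_one, ContinuousLinearMap.smul_apply,
          ContinuousLinearMap.one_apply, inner_smul_left]
        congr 1
        rw [hre, Complex.conj_ofReal, Complex.ofReal_re, Complex.re_ofReal_mul]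
        congr 1
        rw [← RCLike.re_to_complex]
        exact inner_self_eq_norm_sq u
      calc ‖u‖^2 * ((⟨w.re - 2, by linarith⟩ : NNReal) : ℝ)
          = (w.re - 2) * ‖u‖^2 := by push_cast; ring
        _ ≤ w.re * ‖u‖^2 - (⟪T u, u⟫_ℂ).re := by nlinarith [sq_nonneg ‖u‖]
        _ = (⟪(algebraMap ℂ (H →L[ℂ] H) w - T) u, u⟫_ℂ).re := h3.symm
        _ ≤ ‖⟪(algebraMap ℂ (H →L[ℂ] H) w - T) u, u⟫_ℂ‖ := Complex.re_le_norm _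

lemma mem_spectrum_of_approx (T : H →L[ℂ] H) (z : ℂ)
    (h : ∀ C : ℝ, 0 < C → ∃ v : H, C * ‖z • v - T v‖ < ‖v‖) : z ∈ spectrum ℂ T := by
  rw [spectrum.mem_iff]
  intro hu
  obtain ⟨v, hv⟩ := h (‖((hu.unit⁻¹ : (H →L[ℂ] H)ˣ) : H →L[ℂ] H)‖ + 1) (by positivity)
  have h1 : ((hu.unit⁻¹ : (H →L[ℂ] H)ˣ) : H →L[ℂ] H) * (algebraMap ℂ (H →L[ℂ] H) z - T)
      = 1 := by
    calc ((hu.unit⁻¹ : (H →L[ℂ] H)ˣ) : H →L[ℂ] H) * (algebraMap ℂ (H →L[ℂ] H) z - T)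
        = ((hu.unit⁻¹ : (H →L[ℂ] H)ˣ) : H →L[ℂ] H) * (hu.unit : H →L[ℂ] H) := by
          rw [hu.unit_spec]
      _ = 1 := hu.unit.inv_mul
  have h2 : ((hu.unit⁻¹ : (H →L[ℂ] H)ˣ) : H →L[ℂ] H) (z • v - T v) = v := by
    have h3 : (algebraMap ℂ (H →L[ℂ] H) z - T) v = z • v - T v := by
      rw [ContinuousLinearMap.sub_apply, Algebra.algebraMap_eq_smul_one,
        ContinuousLinearMap.smul_apply, ContinuousLinearMap.one_apply]
    rw [← h3, ← ContinuousLinearMap.mul_apply, h1, ContinuousLinearMap.one_apply]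
  have h4 : ‖v‖ ≤ ‖((hu.unit⁻¹ : (H →L[ℂ] H)ˣ) : H →L[ℂ] H)‖ * ‖z • v - T v‖ := by
    conv_lhs => rw [← h2]
    exact ContinuousLinearMap.le_opNorm _ _
  nlinarith [norm_nonneg (z • v - T v), norm_nonneg v]

lemma single_coord (n m : ℕ) (a : ℂ) : (lp.single 2 n a : H) m = if m = n then a else 0 := by
  rw [lp.single_apply]; split_ifs with h
  · subst h; simp
  · simp [h]

lemma norm_xi (n : ℕ) : ‖ξ n‖ = 1 := by
  have h := lp.norm_single (p := 2) (E := fun _ : ℕ => ℂ) (by norm_num) n (1:ℂ)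
  simpa [ξ] using h

section Approx

lemma eigen_identity (s e : H →L[ℂ] H) (hs : ∀ n : ℕ, s (ξ n) = ξ (n + 1))
    (he : ∀ v : H, e v = (inner ℂ (ξ 0) v : ℂ) • ξ 0) (c : ℝ) (t : ℝ) (M : ℕ)
    (r : ℂ) (hrt : r + (starRingEnd ℂ) r = (t:ℂ)) (hr1 : r * (starRingEnd ℂ) r = 1) :
    (t:ℂ) • (∑ n ∈ Finset.range (M+2), lp.single 2 n (r ^ n) : H)
      - (s + adjoint s - (c:ℂ) • e) (∑ n ∈ Finset.range (M+2), lp.single 2 n (r ^ n) : H)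
    = ((starRingEnd ℂ) r + (c:ℂ)) • ξ 0 + (r^(M+2)) • ξ (M+1) - (r^(M+1)) • ξ (M+2) := by
  set v : H := (∑ n ∈ Finset.range (M+2), lp.single 2 n (r ^ n) : H) with hvdef
  have hv_coord : ∀ m : ℕ, v m = if m < M+2 then r ^ m else 0 := by
    intro m
    have h1 : (v : ∀ _ : ℕ, ℂ) m
        = ∑ n ∈ Finset.range (M+2), (lp.single 2 n (r^n) : H) m := by
      rw [hvdef, lp.coeFn_sum, Finset.sum_apply]
    rw [h1]
    simp only [single_coord]
    rw [Finset.sum_ite_eq (Finset.range (M+2)) m (fun n => r^n)]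
    simp only [Finset.mem_range]
  have he_v : e v = ξ 0 := by
    rw [he, inner_xi, hv_coord 0]
    norm_num
  have hTv : (s + adjoint s - (c:ℂ) • e) v = s v + adjoint s v - (c:ℂ) • ξ 0 := by
    rw [ContinuousLinearMap.sub_apply, ContinuousLinearMap.add_apply,
      ContinuousLinearMap.smul_apply, he_v]
  rw [hTv]
  apply lp.ext; funext m
  simp only [lp.coeFn_sub, lp.coeFn_add, lp.coeFn_smul, Pi.sub_apply, Pi.add_apply,
    Pi.smul_apply, smul_eq_mul]
  cases m with
  | zero =>
    rw [coord_s_zero s hs, coord_adj s hs, hv_coord 0, hv_coord 1]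
    rw [ξ, ξ, ξ, single_coord, single_coord, single_coord]
    split_ifs <;> first
      | contradiction
      | (exfalso; omega)
      | linear_combination -hrt
      | linear_combination hrt
  | succ k =>
    rw [coord_s_succ s hs, coord_adj s hs, hv_coord (k+1), hv_coord k, hv_coord (k+2)]
    rw [ξ, ξ, ξ, single_coord, single_coord, single_coord]
    split_ifs
    all_goals try contradiction
    all_goals try (exfalso; omega)
    all_goals try (have hk : k = M := (by omega); subst hk)
    all_goals try (have hk : k = M + 1 := (by omega); subst hk)
    all_goals try ring
    all_goals try linear_combination (-(r^(k+1))) * hrt + (r^k) * hr1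
    all_goals try linear_combination (-(r^(M+1))) * hrt + (r^M) * hr1
    all_goals linear_combination (-(r^(M+2))) * hrt + (r^(M+1)) * hr1

end Approx


lemma norm2_vsum (r : ℂ) (habs : ‖r‖ = 1) (M : ℕ) :
    ‖(∑ n ∈ Finset.range (M+2), lp.single 2 n (r ^ n) : H)‖^2 = ((M:ℝ)+2) := by
  have h := lp.norm_sum_single (p := 2) (by norm_num) (fun n : ℕ => r^n) (Finset.range (M+2))
  simp only [ENNReal.toReal_ofNat, Real.rpow_two] at h
  rw [h]
  have h2 : ∀ n ∈ Finset.range (M+2), ‖r^n‖^2 = 1 := fun n _ => by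
    rw [norm_pow, habs, one_pow, one_pow]
  rw [Finset.sum_congr rfl h2]
  simp

lemma subset_spec (s e : H →L[ℂ] H) (hs : ∀ n : ℕ, s (ξ n) = ξ (n + 1))
    (he : ∀ v : H, e v = (inner ℂ (ξ 0) v : ℂ) • ξ 0) (c : ℝ) (hc0 : 0 ≤ c) (hc1 : c ≤ 1)
    (t : ℝ) (ht : t ∈ Set.Icc (-2:ℝ) 2) :
    (t:ℂ) ∈ spectrum ℂ (s + adjoint s - (c:ℂ) • e) := by
  apply mem_spectrum_of_approx
  intro C hC
  obtain ⟨M, hM⟩ := exists_nat_gt ((4*C)^2)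
  set θ := Real.arccos (t/2) with hθ
  set r := Complex.exp ((θ:ℂ) * Complex.I) with hr
  have habs : ‖r‖ = 1 := Complex.norm_exp_ofReal_mul_I θ
  have hr1 : r * (starRingEnd ℂ) r = 1 := by
    rw [Complex.mul_conj, Complex.normSq_eq_norm_sq, habs]
    norm_num
  have hcos : Real.cos θ = t/2 := Real.cos_arccos (by linarith [ht.1]) (by linarith [ht.2])
  have hr_eq : r = ((Real.cos θ : ℝ) : ℂ) + ((Real.sin θ : ℝ) : ℂ) * Complex.I := by
    rw [hr, Complex.exp_mul_I, Complex.ofReal_cos, Complex.ofReal_sin]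
  have hrt : r + (starRingEnd ℂ) r = (t:ℂ) := by
    rw [hr_eq]
    simp only [map_add, map_mul, Complex.conj_ofReal, Complex.conj_I]
    rw [hcos]
    push_cast
    ring
  have hid := eigen_identity s e hs he c t M r hrt hr1
  refine ⟨(∑ n ∈ Finset.range (M+2), lp.single 2 n (r ^ n) : H), ?_⟩
  have hbnd : ‖(t:ℂ) • (∑ n ∈ Finset.range (M+2), lp.single 2 n (r ^ n) : H)
      - (s + adjoint s - (c:ℂ) • e) (∑ n ∈ Finset.range (M+2), lp.single 2 n (r ^ n) : H)‖
      ≤ 4 := by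
    rw [hid]
    have h1 : ‖((starRingEnd ℂ) r + (c:ℂ)) • ξ 0‖ ≤ 2 := by
      rw [norm_smul, norm_xi, mul_one]
      calc ‖(starRingEnd ℂ) r + (c:ℂ)‖ ≤ ‖(starRingEnd ℂ) r‖ + ‖(c:ℂ)‖ := norm_add_le _ _
        _ ≤ 2 := by
            rw [RCLike.norm_conj, habs, Complex.norm_real]
            rw [Real.norm_eq_abs, _root_.abs_of_nonneg hc0]
            linarith
    have h2 : ‖(r^(M+2)) • ξ (M+1)‖ = 1 := by
      rw [norm_smul, norm_xi, mul_one, norm_pow, habs, one_pow]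
    have h3 : ‖(r^(M+1)) • ξ (M+2)‖ = 1 := by
      rw [norm_smul, norm_xi, mul_one, norm_pow, habs, one_pow]
    calc ‖((starRingEnd ℂ) r + (c:ℂ)) • ξ 0 + (r^(M+2)) • ξ (M+1) - (r^(M+1)) • ξ (M+2)‖
        ≤ ‖((starRingEnd ℂ) r + (c:ℂ)) • ξ 0 + (r^(M+2)) • ξ (M+1)‖ + ‖(r^(M+1)) • ξ (M+2)‖ :=
          norm_sub_le _ _
      _ ≤ ‖((starRingEnd ℂ) r + (c:ℂ)) • ξ 0‖ + ‖(r^(M+2)) • ξ (M+1)‖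
            + ‖(r^(M+1)) • ξ (M+2)‖ := by
          have := norm_add_le (((starRingEnd ℂ) r + (c:ℂ)) • ξ 0) ((r^(M+2)) • ξ (M+1))
          linarith
      _ ≤ 4 := by rw [h2, h3]; linarith
  have hv2 := norm2_vsum r habs M
  have hlt : 4*C < ‖(∑ n ∈ Finset.range (M+2), lp.single 2 n (r ^ n) : H)‖ := by
    apply lt_of_pow_lt_pow_left₀ 2 (norm_nonneg _)
    rw [hv2]
    linarith
  calc C * ‖(t:ℂ) • (∑ n ∈ Finset.range (M+2), lp.single 2 n (r ^ n) : H)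
      - (s + adjoint s - (c:ℂ) • e) (∑ n ∈ Finset.range (M+2), lp.single 2 n (r ^ n) : H)‖
      ≤ C * 4 := mul_le_mul_of_nonneg_left hbnd hC.le
    _ < ‖(∑ n ∈ Finset.range (M+2), lp.single 2 n (r ^ n) : H)‖ := by linarith

lemma main_spec (s e : H →L[ℂ] H) (hs : ∀ n : ℕ, s (ξ n) = ξ (n + 1))
    (he : ∀ v : H, e v = (inner ℂ (ξ 0) v : ℂ) • ξ 0) (c : ℝ) (hc0 : 0 ≤ c) (hc1 : c ≤ 1) :
    spectrum ℂ (s + adjoint s - (c:ℂ) • e) = (fun t : ℝ => (t:ℂ)) '' Set.Icc (-2) 2 := by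
  apply Set.eq_of_subset_of_subset
  · apply spec_subset
    · have h1 : IsSelfAdjoint (s + adjoint s) := by
        rw [IsSelfAdjoint, star_eq_adjoint, map_add, adjoint_adjoint, add_comm]
      have h2 : IsSelfAdjoint e := by
        rw [isSelfAdjoint_iff_isSymmetric]
        intro u w
        simp only [ContinuousLinearMap.coe_coe]
        rw [he, he]
        simp only [inner_smul_left, inner_smul_right]
        rw [← inner_conj_symm (ξ 0) u]
        rw [Complex.conj_conj]; ring
      have h3 : IsSelfAdjoint ((c:ℂ) • e) := by
        rw [IsSelfAdjoint, star_smul, h2.star_eq, Complex.star_def, Complex.conj_ofReal]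
      exact h1.sub h3
    · exact quad_bound s e hs he c hc0 hc1
  · rintro w ⟨t, ht, rfl⟩
    exact subset_spec s e hs he c hc0 hc1 t ht


/-- If `δ > 1`, `s` is the unilateral shift on `ℓ²(ℕ,ℂ)` and `e` is the orthogonal
projection onto the span of `ξ 0`, then the spectrum of `y = s + s* − δ^{-1/2} e`
equals the spectrum of `s + s*`. -/
theorem stmt2 (δ : ℝ) (hδ : 1 < δ) (s e : H →L[ℂ] H)
    (hs : ∀ n : ℕ, s (ξ n) = ξ (n + 1))
    (he : ∀ v : H, e v = (inner ℂ (ξ 0) v : ℂ) • ξ 0) :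
    spectrum ℂ (s + adjoint s - (((Real.sqrt δ)⁻¹ : ℝ) : ℂ) • e)
      = spectrum ℂ (s + adjoint s) := by
  have hsq : 1 ≤ Real.sqrt δ := by
    rw [show (1:ℝ) = Real.sqrt 1 from (Real.sqrt_one).symm]
    exact Real.sqrt_le_sqrt (by linarith)
  have hc0 : 0 ≤ (Real.sqrt δ)⁻¹ := inv_nonneg.mpr (Real.sqrt_nonneg δ)
  have hc1 : (Real.sqrt δ)⁻¹ ≤ 1 := by
    apply inv_le_one_of_one_le₀ hsq
  have hx : s + adjoint s = s + adjoint s - (((0:ℝ):ℂ)) • e := by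
    push_cast
    rw [zero_smul, sub_zero]
  rw [main_spec s e hs he _ hc0 hc1, hx, main_spec s e hs he 0 le_rfl zero_le_one]
end
end

section
/- For every integer k ≥ 2, the following inequality holds: Σ_{u∈Γ_k} Σ_{w∈Γ_k} n(u,w)·γ_u·γ_w − Σ_{u∈Γ_k} γ_u² + Σ_{v∈B_k} (γ_v − α_v^{(k)})² ≥ (δ − 1) · Σ_{v∈Γ_{k−2}} γ_v². -/
open Finset

lemma stmt15_key {V : Type*} [DecidableEq V] (n : V → V → ℕ) (γ : V → ℝ) (δ : ℝ)
    (Γk Γk1 Γk2 B : Finset V) (A : V → ℝ)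
    (hδ : 1 < δ)
    (hγ : ∀ v, 0 < γ v)
    (hns : ∀ v w, n v w = n w v)
    (h21 : Γk2 ⊆ Γk1) (h1k : Γk1 ⊆ Γk)
    (hzero : ∀ u ∈ Γk, u ∉ Γk1 → ∀ w ∈ Γk2, n u w = 0)
    (hPFle : ∀ (v : V) (T : Finset V), (∑ w ∈ T, (n v w : ℝ) * γ w) ≤ δ * γ v)
    (hPFeq : ∀ v ∈ Γk1, A v = δ * γ v)
    (hpar : ∀ u ∈ Γk, u ∉ Γk1 → γ u ≤ δ * ∑ w ∈ Γk1 \ Γk2, (n u w : ℝ) * γ w)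
    (hAdef : ∀ u, A u = ∑ w ∈ Γk, (n u w : ℝ) * γ w)
    (hB : ∀ u, u ∈ B ↔ u ∈ Γk ∧ A u < γ u) :
    (∑ u ∈ Γk, ∑ w ∈ Γk, (n u w : ℝ) * γ u * γ w) - (∑ u ∈ Γk, γ u ^ 2)
      + (∑ u ∈ B, (γ u - A u) ^ 2)
      ≥ (δ - 1) * ∑ v ∈ Γk2, γ v ^ 2 := by
  have hδ0 : (0:ℝ) < δ := by linarith
  have hγ0 : ∀ v, (0:ℝ) ≤ γ v := fun v => (hγ v).le
  have hterm : ∀ u w, (0:ℝ) ≤ (n u w : ℝ) * γ w :=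
    fun u w => mul_nonneg (Nat.cast_nonneg _) (hγ0 w)
  set S : Finset V := Γk \ Γk1 with hSdef
  set L : Finset V := Γk1 \ Γk2 with hLdef
  set β : V → ℝ := fun u => ∑ w ∈ L, (n u w : ℝ) * γ w with hβdef
  set σ : V → ℝ := fun u => ∑ w ∈ S, (n u w : ℝ) * γ w with hσdef
  set t : V → ℝ := fun u => max (γ u - A u - β u) 0 with htdef
  set τ : V → ℝ := fun w => ∑ u ∈ B, (n w u : ℝ) * t u with hτdef
  have hβ0 : ∀ u, 0 ≤ β u := fun u => Finset.sum_nonneg fun w _ => hterm u w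
  have hσ0 : ∀ u, 0 ≤ σ u := fun u => Finset.sum_nonneg fun w _ => hterm u w
  have ht0 : ∀ u, 0 ≤ t u := fun u => le_max_right _ _
  have htge : ∀ u, γ u - A u - β u ≤ t u := fun u => le_max_left _ _
  -- splitting of A on S
  have hsplit : ∀ u ∈ S, A u = β u + σ u := by
    intro u hu
    rw [Finset.mem_sdiff] at hu
    have e1 : (∑ w ∈ S, (n u w : ℝ) * γ w) + (∑ w ∈ Γk1, (n u w : ℝ) * γ w)
        = ∑ w ∈ Γk, (n u w : ℝ) * γ w := Finset.sum_sdiff h1k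
    have e2 : (∑ w ∈ L, (n u w : ℝ) * γ w) + (∑ w ∈ Γk2, (n u w : ℝ) * γ w)
        = ∑ w ∈ Γk1, (n u w : ℝ) * γ w := Finset.sum_sdiff h21
    have e3 : (∑ w ∈ Γk2, (n u w : ℝ) * γ w) = 0 := by
      apply Finset.sum_eq_zero
      intro w hw
      rw [hzero u hu.1 hu.2 w hw]
      simp
    rw [hAdef, ← e1, ← e2, e3]
    ring
  -- B ⊆ S
  have hBS : B ⊆ S := by
    intro u hu
    rcases (hB u).1 hu with ⟨huk, hlt⟩
    rw [hSdef, Finset.mem_sdiff]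
    refine ⟨huk, fun hu1 => ?_⟩
    have := hPFeq u hu1
    nlinarith [hγ u]
  -- parent bound in terms of β
  have hparβ : ∀ u ∈ S, γ u ≤ δ * β u := by
    intro u hu
    rw [Finset.mem_sdiff] at hu
    exact hpar u hu.1 hu.2
  -- no edges inside B
  have hind : ∀ u ∈ B, ∀ w ∈ B, n u w = 0 := by
    intro u hu w hw
    by_contra hne
    have h1 : (1:ℝ) ≤ (n u w : ℝ) := by
      exact_mod_cast Nat.one_le_iff_ne_zero.2 hne
    have h1' : (1:ℝ) ≤ (n w u : ℝ) := by rw [hns w u]; exact h1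
    have hσu : (n u w : ℝ) * γ w ≤ σ u :=
      Finset.single_le_sum (fun w _ => hterm u w) (hBS hw)
    have hσw : (n w u : ℝ) * γ u ≤ σ w :=
      Finset.single_le_sum (fun w' _ => hterm w w') (hBS hu)
    have hau : A u < γ u := ((hB u).1 hu).2
    have haw : A w < γ w := ((hB w).1 hw).2
    have hsu := hsplit u (hBS hu)
    have hsw := hsplit w (hBS hw)
    have hgw : γ w ≤ (n u w : ℝ) * γ w := le_mul_of_one_le_left (hγ0 w) h1
    have hgu : γ u ≤ (n w u : ℝ) * γ u := le_mul_of_one_le_left (hγ0 u) h1'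
    have := hβ0 u
    have := hβ0 w
    linarith
  -- ledger identity
  have hledger : (∑ u ∈ B, t u * σ u) = ∑ w ∈ S \ B, γ w * τ w := by
    have e1 : ∀ u ∈ B, t u * σ u = ∑ w ∈ S \ B, (n u w : ℝ) * t u * γ w := by
      intro u hu
      have : t u * σ u = ∑ w ∈ S, (n u w : ℝ) * t u * γ w := by
        rw [hσdef, Finset.mul_sum]
        exact Finset.sum_congr rfl fun w _ => by ring
      rw [this]
      rw [← Finset.sum_sdiff hBS]
      have : (∑ w ∈ B, (n u w : ℝ) * t u * γ w) = 0 := by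
        apply Finset.sum_eq_zero
        intro w hw
        rw [hind u hu w hw]
        simp
      rw [this, add_zero]
    rw [Finset.sum_congr rfl e1, Finset.sum_comm]
    apply Finset.sum_congr rfl
    intro w hw
    rw [hτdef, Finset.mul_sum]
    apply Finset.sum_congr rfl
    intro u hu
    rw [hns w u]
    ring
  -- constant c
  have hc0 : 0 ≤ 1 - 1/δ := by
    have : 1/δ ≤ 1 := by rw [div_le_one hδ0]; linarith
    linarith
  -- (a) per-vertex bound on B
  have ha : ∀ u ∈ B, -(t u * σ u) - (1 - 1/δ) * (β u * γ u)
      ≤ A u ^ 2 - γ u * A u := by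
    intro u hu
    have hus : u ∈ S := hBS hu
    have hsu := hsplit u hus
    have hpu := hparβ u hus
    have hβγ : β u * γ u ≤ δ * (β u * β u) := by
      have := mul_le_mul_of_nonneg_left hpu (hβ0 u)
      nlinarith
    have hcβγ : β u * γ u - β u * β u ≤ (1 - 1/δ) * (β u * γ u) := by
      have hdiv : (β u * γ u) / δ ≤ β u * β u := by
        rw [div_le_iff₀ hδ0]; nlinarith
      have hexp : (1 - 1/δ) * (β u * γ u) = β u * γ u - (β u * γ u)/δ := by
        field_simp
      linarith
    have hfin : 0 ≤ σ u * (A u + β u - γ u + t u) := by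
      apply mul_nonneg (hσ0 u)
      have := htge u
      linarith
    have hid : A u ^ 2 - γ u * A u + (β u * γ u - β u * β u) + t u * σ u
        = σ u * (A u + β u - γ u + t u) + (t u - t u) * σ u := by
      have hσ : σ u = A u - β u := by linarith
      rw [hσ]; ring
    nlinarith [hfin, hcβγ, hid]
  -- (b) per-vertex bound on S \ B
  have hb : ∀ w ∈ S \ B, γ w * τ w - (1 - 1/δ) * (β w * γ w)
      ≤ γ w * A w - γ w ^ 2 := by
    intro w hw
    rw [Finset.mem_sdiff] at hw
    obtain ⟨hwS, hwB⟩ := hw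
    have hge : γ w ≤ A w := by
      by_contra hlt
      push_neg at hlt
      exact hwB ((hB w).2 ⟨(Finset.mem_sdiff.1 hwS).1, hlt⟩)
    have hsw := hsplit w hwS
    -- bound τ w
    have hτle : τ w ≤ A w - γ w + (1 - 1/δ) * β w := by
      by_cases hcase : ∀ u ∈ B, n w u = 0
      · have : τ w = 0 := by
          rw [hτdef]
          apply Finset.sum_eq_zero
          intro u hu
          rw [hcase u hu]; simp
        rw [this]
        have := mul_nonneg hc0 (hβ0 w)
        linarith
      · push_neg at hcase
        obtain ⟨u₀, hu₀B, hu₀n⟩ := hcase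
        have h1 : (1:ℝ) ≤ (n w u₀ : ℝ) := by
          exact_mod_cast Nat.one_le_iff_ne_zero.2 hu₀n
        have hu₀S : u₀ ∈ S := hBS hu₀B
        have hσu₀ : (n u₀ w : ℝ) * γ w ≤ σ u₀ :=
          Finset.single_le_sum (fun w' _ => hterm u₀ w') hwS
        have hsu₀ := hsplit u₀ hu₀S
        have hau₀ : A u₀ < γ u₀ := ((hB u₀).1 hu₀B).2
        have htu₀ : t u₀ ≤ γ u₀ - (n w u₀ : ℝ) * γ w := by
          rw [htdef]
          apply max_le
          · rw [hns w u₀]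
            have := hβ0 u₀
            linarith
          · rw [hns w u₀]
            have := hβ0 u₀
            linarith
        have htleγ : ∀ u ∈ B, t u ≤ γ u := by
          intro u hu
          have hus := hBS hu
          have := hsplit u hus
          have := hβ0 u
          have := hσ0 u
          have hau : A u < γ u := ((hB u).1 hu).2
          rw [htdef]
          apply max_le
          · linarith
          · exact (hγ0 u)
        -- τ w ≤ (∑ u ∈ B, n w u * γ u) - γ w
        have hstep1 : τ w ≤ (∑ u ∈ B, (n w u : ℝ) * γ u) - γ w := by
          have hτeq : τ w = (n w u₀ : ℝ) * t u₀ + ∑ u ∈ B.erase u₀, (n w u : ℝ) * t u :=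
            (Finset.add_sum_erase _ (fun u => (n w u : ℝ) * t u) hu₀B).symm
          have hγeq : (n w u₀ : ℝ) * γ u₀ + (∑ u ∈ B.erase u₀, (n w u : ℝ) * γ u)
              = ∑ u ∈ B, (n w u : ℝ) * γ u :=
            Finset.add_sum_erase _ (fun u => (n w u : ℝ) * γ u) hu₀B
          have hrest : (∑ u ∈ B.erase u₀, (n w u : ℝ) * t u)
              ≤ ∑ u ∈ B.erase u₀, (n w u : ℝ) * γ u := by
            apply Finset.sum_le_sum
            intro u hu
            have := htleγ u (Finset.mem_of_mem_erase hu)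
            have : (0:ℝ) ≤ (n w u : ℝ) := Nat.cast_nonneg _
            apply mul_le_mul_of_nonneg_left (htleγ u (Finset.mem_of_mem_erase hu)) this
          have hmain : (n w u₀ : ℝ) * t u₀ ≤ (n w u₀ : ℝ) * γ u₀ - γ w := by
            have hmul := mul_le_mul_of_nonneg_left htu₀ (le_trans zero_le_one h1)
            have e1 : 0 ≤ ((n w u₀ : ℝ) - 1) * ((n w u₀ : ℝ) * γ w) :=
              mul_nonneg (by linarith) (mul_nonneg (Nat.cast_nonneg _) (hγ0 w))
            have e2 : 0 ≤ ((n w u₀ : ℝ) - 1) * γ w := mul_nonneg (by linarith) (hγ0 w)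
            nlinarith
          linarith [hτeq, hγeq, hrest, hmain]
        have hstep2 : (∑ u ∈ B, (n w u : ℝ) * γ u) ≤ σ w := by
          rw [hσdef]
          apply Finset.sum_le_sum_of_subset_of_nonneg hBS
          intro u _ _
          exact hterm w u
        have hβc : 0 ≤ (1 - 1/δ) * β w + β w := by
          have := mul_nonneg hc0 (hβ0 w)
          have := hβ0 w
          linarith
        linarith
    have := mul_le_mul_of_nonneg_left hτle (hγ0 w)
    nlinarith
  -- step 4 : ∑_{u in S} β u * γ u ≤ δ * ∑_{v in L} γ v ^2
  have hstep4 : (∑ u ∈ S, β u * γ u) ≤ δ * ∑ v ∈ L, γ v ^ 2 := by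
    have e1 : (∑ u ∈ S, β u * γ u) = ∑ v ∈ L, ∑ u ∈ S, (n v u : ℝ) * γ u * γ v := by
      rw [Finset.sum_comm]
      apply Finset.sum_congr rfl
      intro u _
      rw [hβdef, Finset.sum_mul]
      apply Finset.sum_congr rfl
      intro v _
      rw [hns v u]
      ring
    rw [e1, Finset.mul_sum]
    apply Finset.sum_le_sum
    intro v _
    have h1 : (∑ u ∈ S, (n v u : ℝ) * γ u * γ v) = (∑ u ∈ S, (n v u : ℝ) * γ u) * γ v := by
      rw [Finset.sum_mul]
    rw [h1]
    have h2 := hPFle v S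
    have := hγ0 v
    nlinarith
  -- assemble
  have hLHS1 : (∑ u ∈ Γk, ∑ w ∈ Γk, (n u w : ℝ) * γ u * γ w)
      = ∑ u ∈ Γk, γ u * A u := by
    apply Finset.sum_congr rfl
    intro u _
    rw [hAdef, Finset.mul_sum]
    apply Finset.sum_congr rfl
    intro w _
    ring
  have hsd1 : (∑ u ∈ S, (γ u * A u - γ u ^ 2)) + (∑ u ∈ Γk1, (γ u * A u - γ u ^ 2))
      = ∑ u ∈ Γk, (γ u * A u - γ u ^ 2) := Finset.sum_sdiff h1k
  have hΓk1 : (∑ u ∈ Γk1, (γ u * A u - γ u ^ 2)) = (δ - 1) * ∑ u ∈ Γk1, γ u ^ 2 := by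
    rw [Finset.mul_sum]
    apply Finset.sum_congr rfl
    intro u hu
    rw [hPFeq u hu]
    ring
  have hsd2 : (∑ u ∈ L, γ u ^ 2) + (∑ u ∈ Γk2, γ u ^ 2) = ∑ u ∈ Γk1, γ u ^ 2 :=
    Finset.sum_sdiff h21
  have hsd3 : (∑ u ∈ S \ B, (γ u * A u - γ u ^ 2)) + (∑ u ∈ B, (γ u * A u - γ u ^ 2))
      = ∑ u ∈ S, (γ u * A u - γ u ^ 2) := Finset.sum_sdiff hBS
  have hsum_sub : (∑ u ∈ Γk, (γ u * A u - γ u ^ 2))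
      = (∑ u ∈ Γk, γ u * A u) - ∑ u ∈ Γk, γ u ^ 2 := by
    rw [Finset.sum_sub_distrib]
  -- inequalities summed
  have hSa : (∑ u ∈ B, (-(t u * σ u) - (1 - 1/δ) * (β u * γ u)))
      ≤ ∑ u ∈ B, (A u ^ 2 - γ u * A u) := Finset.sum_le_sum ha
  have hSb : (∑ w ∈ S \ B, (γ w * τ w - (1 - 1/δ) * (β w * γ w)))
      ≤ ∑ w ∈ S \ B, (γ w * A w - γ w ^ 2) := Finset.sum_le_sum hb
  have hBcomb : (∑ u ∈ B, (γ u * A u - γ u ^ 2)) + (∑ u ∈ B, (γ u - A u) ^ 2)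
      = ∑ u ∈ B, (A u ^ 2 - γ u * A u) := by
    rw [← Finset.sum_add_distrib]
    apply Finset.sum_congr rfl
    intro u _
    ring
  have hsum_a : (∑ u ∈ B, (-(t u * σ u) - (1 - 1/δ) * (β u * γ u)))
      = -(∑ u ∈ B, t u * σ u) - (1 - 1/δ) * (∑ u ∈ B, β u * γ u) := by
    rw [Finset.sum_sub_distrib, Finset.sum_neg_distrib, Finset.mul_sum]
  have hsum_b : (∑ w ∈ S \ B, (γ w * τ w - (1 - 1/δ) * (β w * γ w)))
      = (∑ w ∈ S \ B, γ w * τ w) - (1 - 1/δ) * (∑ w ∈ S \ B, β w * γ w) := by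
    rw [Finset.sum_sub_distrib, Finset.mul_sum]
  have hsd4 : (∑ u ∈ S \ B, β u * γ u) + (∑ u ∈ B, β u * γ u) = ∑ u ∈ S, β u * γ u :=
    Finset.sum_sdiff hBS
  have hc4 : (1 - 1/δ) * (∑ u ∈ S, β u * γ u) ≤ (δ - 1) * ∑ v ∈ L, γ v ^ 2 := by
    have h1 : (1 - 1/δ) * (∑ u ∈ S, β u * γ u) ≤ (1 - 1/δ) * (δ * ∑ v ∈ L, γ v ^ 2) :=
      mul_le_mul_of_nonneg_left hstep4 hc0
    have h2 : (1 - 1/δ) * (δ * ∑ v ∈ L, γ v ^ 2) = (δ - 1) * ∑ v ∈ L, γ v ^ 2 := by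
      field_simp
    linarith
  have hcsplit : (1 - 1/δ) * (∑ u ∈ S \ B, β u * γ u) + (1 - 1/δ) * (∑ u ∈ B, β u * γ u)
      = (1 - 1/δ) * (∑ u ∈ S, β u * γ u) := by rw [← hsd4]; ring
  have hmul2 : (δ - 1) * (∑ u ∈ Γk1, γ u ^ 2)
      = (δ - 1) * (∑ u ∈ L, γ u ^ 2) + (δ - 1) * (∑ u ∈ Γk2, γ u ^ 2) := by
    rw [← hsd2]; ring
  rw [hLHS1]
  linarith [hSa, hSb, hledger, hc4, hcsplit, hmul2]


/-- Let `(V, nEdge)` be a connected, locally finite, loopless multigraph with base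
vertex `v₀`, `G` the underlying simple graph, and balls `Γ_j = {v | dist(v₀,v) ≤ j}`
finite.  Let `δ > 1` and let `γ : V → ℝ` be a weighting with `γ_v ≥ 1` satisfying the
Perron–Frobenius condition `δ γ_v = Σ_w n(v,w) γ_w`.  With
`α_v^{(k)} = Σ_{w ∈ Γ_k} n(v,w) γ_w` and `B_k = {v ∈ Γ_k | γ_v > α_v^{(k)}}`,
for every `k ≥ 2` one has
`Σ_{u,w ∈ Γ_k} n(u,w) γ_u γ_w − Σ_{u ∈ Γ_k} γ_u² + Σ_{v ∈ B_k} (γ_v − α_v^{(k)})²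
  ≥ (δ − 1) Σ_{v ∈ Γ_{k−2}} γ_v²`. -/
theorem stmt15 {V : Type*} (v₀ : V) (nEdge : V → V → ℕ)
    (hsymm : ∀ v w, nEdge v w = nEdge w v)
    (hloop : ∀ v, nEdge v v = 0)
    (G : SimpleGraph V)
    (hG : ∀ v w, G.Adj v w ↔ 1 ≤ nEdge v w)
    (hconn : ∀ v, G.Reachable v₀ v)
    (hlocfin : ∀ v, {w | 1 ≤ nEdge v w}.Finite)
    (hball : ∀ j : ℕ, {v | G.dist v₀ v ≤ j}.Finite)
    (δ : ℝ) (hδ : 1 < δ)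
    (γ : V → ℝ) (hγ : ∀ v, 1 ≤ γ v)
    (hPF : ∀ v, δ * γ v = ∑ᶠ w, (nEdge v w : ℝ) * γ w)
    (k : ℕ) (hk : 2 ≤ k) :
    (∑ᶠ u ∈ {v | G.dist v₀ v ≤ k}, ∑ᶠ w ∈ {v | G.dist v₀ v ≤ k},
        (nEdge u w : ℝ) * γ u * γ w)
      - (∑ᶠ u ∈ {v | G.dist v₀ v ≤ k}, γ u ^ 2)
      + (∑ᶠ v ∈ {v | G.dist v₀ v ≤ k ∧
            (∑ᶠ w ∈ {u | G.dist v₀ u ≤ k}, (nEdge v w : ℝ) * γ w) < γ v},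
          (γ v - ∑ᶠ w ∈ {u | G.dist v₀ u ≤ k}, (nEdge v w : ℝ) * γ w) ^ 2)
      ≥ (δ - 1) * ∑ᶠ v ∈ {v | G.dist v₀ v ≤ k - 2}, γ v ^ 2 := by
  classical
  have hγpos : ∀ v, 0 < γ v := fun v => lt_of_lt_of_le one_pos (hγ v)
  have hγ0 : ∀ v, (0:ℝ) ≤ γ v := fun v => (hγpos v).le
  have hterm : ∀ u w, (0:ℝ) ≤ (nEdge u w : ℝ) * γ w :=
    fun u w => mul_nonneg (Nat.cast_nonneg _) (hγ0 w)
  -- distance facts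
  have hadj_dist : ∀ u w, G.Adj u w → G.dist v₀ w ≤ G.dist v₀ u + 1 := by
    intro u w h
    obtain ⟨p, hp⟩ := (hconn u).exists_walk_length_eq_dist
    have := SimpleGraph.dist_le (p.concat h)
    rwa [SimpleGraph.Walk.length_concat, hp] at this
  have hparent_ex : ∀ (u : V) (m : ℕ), G.dist v₀ u = m + 1 →
      ∃ v, G.Adj u v ∧ G.dist v₀ v = m := by
    intro u m hm
    obtain ⟨q, hq⟩ := ((hconn u).symm).exists_walk_length_eq_dist
    have hq' : q.length = m + 1 := by rw [hq, SimpleGraph.dist_comm, hm]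
    cases q with
    | nil => simp at hq'
    | cons ha q' =>
      rename_i x
      have hlen : q'.length = m := by
        simpa [SimpleGraph.Walk.length_cons] using hq'
      have hx1 : G.dist v₀ x ≤ m := by
        have := SimpleGraph.dist_le q'.reverse
        rwa [SimpleGraph.Walk.length_reverse, hlen] at this
      have hx2 : G.dist v₀ u ≤ G.dist v₀ x + 1 := hadj_dist x u ha.symm
      exact ⟨x, ha, by omega⟩
  -- PF over the neighbour finset
  have hPF' : ∀ v, (∑ w ∈ (hlocfin v).toFinset, (nEdge v w : ℝ) * γ w) = δ * γ v := by
    intro v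
    rw [hPF v]
    symm
    apply finsum_eq_sum_of_support_subset
    intro w hw
    rw [Set.Finite.coe_toFinset]
    simp only [Set.mem_setOf_eq]
    by_contra hn
    have : nEdge v w = 0 := by omega
    apply hw
    simp [this]
  have hPFle : ∀ (v : V) (T : Finset V), (∑ w ∈ T, (nEdge v w : ℝ) * γ w) ≤ δ * γ v := by
    intro v T
    have h1 : (∑ w ∈ T ∩ (hlocfin v).toFinset, (nEdge v w : ℝ) * γ w)
        = ∑ w ∈ T, (nEdge v w : ℝ) * γ w := by
      apply Finset.sum_subset (Finset.inter_subset_left)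
      intro x hx hx'
      have : nEdge v x = 0 := by
        by_contra hn
        apply hx'
        rw [Finset.mem_inter]
        refine ⟨hx, ?_⟩
        rw [Set.Finite.mem_toFinset]
        simp only [Set.mem_setOf_eq]
        omega
      simp [this]
    rw [← h1, ← hPF' v]
    apply Finset.sum_le_sum_of_subset_of_nonneg (Finset.inter_subset_right)
    intro w _ _
    exact hterm v w
  -- finsets
  set Γk : Finset V := (hball k).toFinset with hΓk
  set Γk1 : Finset V := (hball (k-1)).toFinset with hΓk1
  set Γk2 : Finset V := (hball (k-2)).toFinset with hΓk2
  have hmemk : ∀ v, v ∈ Γk ↔ G.dist v₀ v ≤ k := fun v => Set.Finite.mem_toFinset _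
  have hmemk1 : ∀ v, v ∈ Γk1 ↔ G.dist v₀ v ≤ k - 1 := fun v => Set.Finite.mem_toFinset _
  have hmemk2 : ∀ v, v ∈ Γk2 ↔ G.dist v₀ v ≤ k - 2 := fun v => Set.Finite.mem_toFinset _
  -- rewrite the goal into finset sums
  have hcoek : {v | G.dist v₀ v ≤ k} = (↑Γk : Set V) := (Set.Finite.coe_toFinset _).symm
  have hcoek2 : {v | G.dist v₀ v ≤ k - 2} = (↑Γk2 : Set V) := (Set.Finite.coe_toFinset _).symm
  simp only [hcoek, hcoek2, finsum_mem_coe_finset]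
  have hsetB : {v | G.dist v₀ v ≤ k ∧ (∑ w ∈ Γk, (nEdge v w : ℝ) * γ w) < γ v}
      = (↑(Γk.filter (fun v => (∑ w ∈ Γk, (nEdge v w : ℝ) * γ w) < γ v)) : Set V) := by
    ext v
    simp [Finset.mem_filter, hmemk v]
  rw [hsetB, finsum_mem_coe_finset]
  -- apply the key lemma
  have h21 : Γk2 ⊆ Γk1 := by
    intro v hv
    rw [hmemk2] at hv
    rw [hmemk1]
    omega
  have h1k : Γk1 ⊆ Γk := by
    intro v hv
    rw [hmemk1] at hv
    rw [hmemk]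
    omega
  have hzero : ∀ u ∈ Γk, u ∉ Γk1 → ∀ w ∈ Γk2, nEdge u w = 0 := by
    intro u hu hu1 w hw
    by_contra hn
    have hadj : G.Adj w u := (hG w u).2 (by rw [hsymm w u]; omega)
    have := hadj_dist w u hadj
    rw [hmemk2] at hw
    apply hu1
    rw [hmemk1]
    omega
  have hPFeq : ∀ v ∈ Γk1, (∑ w ∈ Γk, (nEdge v w : ℝ) * γ w) = δ * γ v := by
    intro v hv
    rw [hmemk1] at hv
    rw [← hPF' v]
    symm
    apply Finset.sum_subset
    · intro w hw
      rw [Set.Finite.mem_toFinset] at hw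
      simp only [Set.mem_setOf_eq] at hw
      have hadj : G.Adj v w := (hG v w).2 hw
      have := hadj_dist v w hadj
      rw [hmemk]
      omega
    · intro w _ hw
      have : nEdge v w = 0 := by
        by_contra hn
        apply hw
        rw [Set.Finite.mem_toFinset]
        simp only [Set.mem_setOf_eq]
        omega
      simp [this]
  have hpar : ∀ u ∈ Γk, u ∉ Γk1 →
      γ u ≤ δ * ∑ w ∈ Γk1 \ Γk2, (nEdge u w : ℝ) * γ w := by
    intro u hu hu1
    rw [hmemk] at hu
    rw [hmemk1] at hu1
    have hdu : G.dist v₀ u = (k - 1) + 1 := by omega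
    obtain ⟨v, hadj, hdv⟩ := hparent_ex u (k-1) hdu
    have hn1 : 1 ≤ nEdge u v := (hG u v).1 hadj
    have hn1' : 1 ≤ nEdge v u := (hG v u).1 hadj.symm
    have hvL : v ∈ Γk1 \ Γk2 := by
      rw [Finset.mem_sdiff, hmemk1, hmemk2]
      omega
    have hstep1 : γ u ≤ δ * γ v := by
      have h2 := hPFle v {u}
      rw [Finset.sum_singleton] at h2
      have h3 : γ u ≤ (nEdge v u : ℝ) * γ u := by
        have : (1:ℝ) ≤ (nEdge v u : ℝ) := by exact_mod_cast hn1'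
        exact le_mul_of_one_le_left (hγ0 u) this
      linarith
    have hstep2 : γ v ≤ ∑ w ∈ Γk1 \ Γk2, (nEdge u w : ℝ) * γ w := by
      have h3 : γ v ≤ (nEdge u v : ℝ) * γ v := by
        have : (1:ℝ) ≤ (nEdge u v : ℝ) := by exact_mod_cast hn1
        exact le_mul_of_one_le_left (hγ0 v) this
      calc γ v ≤ (nEdge u v : ℝ) * γ v := h3
        _ ≤ ∑ w ∈ Γk1 \ Γk2, (nEdge u w : ℝ) * γ w :=
          Finset.single_le_sum (fun w _ => hterm u w) hvL
    calc γ u ≤ δ * γ v := hstep1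
      _ ≤ δ * ∑ w ∈ Γk1 \ Γk2, (nEdge u w : ℝ) * γ w := by
        apply mul_le_mul_of_nonneg_left hstep2 (by linarith)
  exact stmt15_key nEdge γ δ Γk Γk1 Γk2 _ (fun u => ∑ w ∈ Γk, (nEdge u w : ℝ) * γ w)
    hδ hγpos hsymm h21 h1k hzero hPFle hPFeq hpar (fun u => rfl)
    (fun u => by simp [Finset.mem_filter])
end

section
/- If moreover V is infinite, then the quantity Q_k = Σ_{u∈Γ_k} Σ_{w∈Γ_k} n(u,w)·γ_u·γ_w − Σ_{u∈Γ_k} γ_u² + Σ_{v∈B_k} (γ_v − α_v^{(k)})² tends to infinity as k → ∞. -/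
/-- Let `(V, nEdge)` be a connected, locally finite, loopless multigraph with base
vertex `v₀`, `G` the underlying simple graph, and balls `Γ_j = {v | dist(v₀,v) ≤ j}`
finite.  Let `δ > 1` and let `γ : V → ℝ` be a weighting with `γ_v ≥ 1` satisfying the
Perron–Frobenius condition `δ γ_v = Σ_w n(v,w) γ_w`.  If moreover `V` is infinite,
then, with `α_v^{(k)} = Σ_{w ∈ Γ_k} n(v,w) γ_w` and `B_k = {v ∈ Γ_k | γ_v > α_v^{(k)}}`,
the quantity
`Q_k = Σ_{u,w ∈ Γ_k} n(u,w) γ_u γ_w − Σ_{u ∈ Γ_k} γ_u² + Σ_{v ∈ B_k} (γ_v − α_v^{(k)})²`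
tends to infinity as `k → ∞`. -/
theorem stmt16 {V : Type*} (hV : Infinite V) (v₀ : V) (nEdge : V → V → ℕ)
    (hsymm : ∀ v w, nEdge v w = nEdge w v)
    (hloop : ∀ v, nEdge v v = 0)
    (G : SimpleGraph V)
    (hG : ∀ v w, G.Adj v w ↔ 1 ≤ nEdge v w)
    (hconn : ∀ v, G.Reachable v₀ v)
    (hlocfin : ∀ v, {w | 1 ≤ nEdge v w}.Finite)
    (hball : ∀ j : ℕ, {v | G.dist v₀ v ≤ j}.Finite)
    (δ : ℝ) (hδ : 1 < δ)
    (γ : V → ℝ) (hγ : ∀ v, 1 ≤ γ v)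
    (hPF : ∀ v, δ * γ v = ∑ᶠ w, (nEdge v w : ℝ) * γ w) :
    Filter.Tendsto (fun k : ℕ =>
      (∑ᶠ u ∈ {v | G.dist v₀ v ≤ k}, ∑ᶠ w ∈ {v | G.dist v₀ v ≤ k},
          (nEdge u w : ℝ) * γ u * γ w)
        - (∑ᶠ u ∈ {v | G.dist v₀ v ≤ k}, γ u ^ 2)
        + (∑ᶠ v ∈ {v | G.dist v₀ v ≤ k ∧
              (∑ᶠ w ∈ {u | G.dist v₀ u ≤ k}, (nEdge v w : ℝ) * γ w) < γ v},
            (γ v - ∑ᶠ w ∈ {u | G.dist v₀ u ≤ k}, (nEdge v w : ℝ) * γ w) ^ 2))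
      Filter.atTop Filter.atTop := by
  classical
  set F : ℕ → Finset V := fun j => (hball j).toFinset with hFdef
  have hmemF : ∀ j v, v ∈ F j ↔ G.dist v₀ v ≤ j := fun j v => (hball j).mem_toFinset
  have hγ0 : ∀ v, (0:ℝ) < γ v := fun v => lt_of_lt_of_le one_pos (hγ v)
  set A : ℕ → V → ℝ := fun k v => ∑ w ∈ F k, (nEdge v w : ℝ) * γ w with hAdef
  have hterm : ∀ v w, (0:ℝ) ≤ (nEdge v w : ℝ) * γ w := fun v w =>
    mul_nonneg (Nat.cast_nonneg _) (le_of_lt (hγ0 w))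
  -- adjacency increases distance by at most one
  have hadjdist : ∀ v w, 1 ≤ nEdge v w → G.dist v₀ w ≤ G.dist v₀ v + 1 := by
    intro v w hn
    obtain ⟨p, hp⟩ := (hconn v).exists_walk_length_eq_dist
    have hadj : G.Adj v w := (hG v w).2 hn
    calc G.dist v₀ w ≤ (p.concat hadj).length := SimpleGraph.dist_le _
      _ = G.dist v₀ v + 1 := by rw [SimpleGraph.Walk.length_concat, hp]
  -- restricted Perron-Frobenius identity
  have hPFk : ∀ k v, G.dist v₀ v + 1 ≤ k → A k v = δ * γ v := by
    intro k v h
    rw [hPF v]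
    refine (finsum_eq_finset_sum_of_support_subset _ ?_).symm
    intro w hw
    have hn : 1 ≤ nEdge v w := by
      by_contra hc
      push_neg at hc
      interval_cases h : nEdge v w
      · simp [h] at hw
      -- unreachable
    have : G.dist v₀ w ≤ k := le_trans (hadjdist v w hn) h
    simpa [hmemF] using this
  -- A k v is at least any single term
  have hsingle : ∀ k v u, u ∈ F k → (nEdge v u : ℝ) * γ u ≤ A k v := by
    intro k v u hu
    exact Finset.single_le_sum (fun i _ => hterm v i) hu
  -- predecessor along a geodesic
  have hpred : ∀ u, 1 ≤ G.dist v₀ u → ∃ w, 1 ≤ nEdge u w ∧ G.dist v₀ w + 1 ≤ G.dist v₀ u := by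
    intro u hu
    obtain ⟨p, hp⟩ := (hconn u).symm.exists_walk_length_eq_dist
    cases p with
    | nil =>
      rw [SimpleGraph.Walk.length_nil, SimpleGraph.dist_comm] at hp
      omega
    | @cons _ w _ h q =>
      refine ⟨w, (hG u w).1 h, ?_⟩
      rw [SimpleGraph.Walk.length_cons, SimpleGraph.dist_comm] at hp
      have : G.dist v₀ w ≤ q.length := by
        rw [SimpleGraph.dist_comm]; exact SimpleGraph.dist_le q
      omega
  set B : ℕ → Finset V := fun k => (F k).filter (fun v => A k v < γ v) with hBdef
  set Q : ℕ → ℝ := fun k => (∑ u ∈ F k, γ u * A k u) - (∑ u ∈ F k, γ u ^ 2)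
      + ∑ v ∈ B k, (γ v - A k v) ^ 2 with hQdef
  -- members of B k are at distance exactly k
  have hBfar : ∀ k v, v ∈ B k → ¬ (G.dist v₀ v + 1 ≤ k) := by
    intro k v hv hle
    have h1 : A k v = δ * γ v := hPFk k v hle
    have h2 : A k v < γ v := (Finset.mem_filter.1 hv).2
    nlinarith [hγ0 v]
  -- the key lower bound
  have key : ∀ k, 2 ≤ k → (δ - 1) * ((F (k-2)).card : ℝ) ≤ Q k := by
    intro k hk
    have hIM : F (k-2) ⊆ F (k-1) := by
      intro v hv; rw [hmemF] at *; omega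
    have hMF : F (k-1) ⊆ F k := by
      intro v hv; rw [hmemF] at *; omega
    have hBO : B k ⊆ F k \ F (k-1) := by
      intro v hv
      rw [Finset.mem_sdiff]
      refine ⟨(Finset.mem_filter.1 hv).1, ?_⟩
      intro hc
      exact hBfar k v hv (by rw [hmemF] at hc; omega)
    set c : V → ℝ := fun v => γ v * A k v - γ v ^ 2
        + (if A k v < γ v then (γ v - A k v) ^ 2 else 0) with hcdef
    have hQc : Q k = ∑ v ∈ F k, c v := by
      rw [hQdef]
      simp only [hBdef, Finset.sum_filter, hcdef]
      rw [Finset.sum_add_distrib, Finset.sum_sub_distrib]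
    -- values of c on the pieces
    have hcI : ∀ v ∈ F (k-1), c v = (δ - 1) * γ v ^ 2 := by
      intro v hv
      have hle : G.dist v₀ v + 1 ≤ k := by rw [hmemF] at hv; omega
      have hA : A k v = δ * γ v := hPFk k v hle
      have hnot : ¬ (A k v < γ v) := by rw [hA]; nlinarith [hγ0 v]
      simp only [hcdef]
      rw [if_neg hnot, hA]; ring
    have hcB : ∀ v ∈ B k, c v = -(A k v * (γ v - A k v)) := by
      intro v hv
      have h2 : A k v < γ v := (Finset.mem_filter.1 hv).2
      rw [hcdef]; simp only [if_pos h2]; ring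
    have hcC : ∀ v ∈ (F k \ F (k-1)) \ B k, c v = γ v * (A k v - γ v) := by
      intro v hv
      rw [Finset.mem_sdiff, Finset.mem_sdiff] at hv
      have hvF : v ∈ F k := hv.1.1
      have hnot : ¬ (A k v < γ v) := by
        intro hc; exact hv.2 (Finset.mem_filter.2 ⟨hvF, hc⟩)
      rw [hcdef]; simp only [if_neg hnot]; ring
    -- split the sum
    have hsplit : ∀ f : V → ℝ, ∑ v ∈ F k, f v
        = ∑ v ∈ F (k-2), f v + ∑ v ∈ F (k-1) \ F (k-2), f v
          + ∑ v ∈ (F k \ F (k-1)) \ B k, f v + ∑ v ∈ B k, f v := by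
      intro f
      rw [← Finset.sum_sdiff hMF, ← Finset.sum_sdiff hIM, ← Finset.sum_sdiff hBO]
      ring
    -- the absorption inequality
    have habs : ∑ v ∈ B k, A k v * (γ v - A k v)
        ≤ ∑ u ∈ F (k-1) \ F (k-2), (δ - 1) * γ u ^ 2
          + ∑ u ∈ (F k \ F (k-1)) \ B k, γ u * (A k u - γ u) := by
      have hexp : ∑ v ∈ B k, A k v * (γ v - A k v)
          = ∑ u ∈ F k, ∑ v ∈ B k, (nEdge v u : ℝ) * γ u * (γ v - A k v) := by
        rw [Finset.sum_comm]
        refine Finset.sum_congr rfl fun v hv => ?_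
        rw [hAdef]
        rw [Finset.sum_mul]
      set g : V → ℝ := fun u => ∑ v ∈ B k, (nEdge v u : ℝ) * γ u * (γ v - A k v) with hgdef
      -- termwise bound
      have htb : ∀ u ∈ F k, ∀ v ∈ B k,
          (nEdge v u : ℝ) * γ u * (γ v - A k v)
            ≤ (nEdge v u : ℝ) * γ u * γ v - (nEdge v u : ℝ) * γ u ^ 2 := by
        intro u hu v hv
        rcases Nat.eq_zero_or_pos (nEdge v u) with h0 | h1
        · simp [h0]
        · have hA : (nEdge v u : ℝ) * γ u ≤ A k v := hsingle k v u hu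
          have hn1 : (1:ℝ) ≤ (nEdge v u : ℝ) := by exact_mod_cast h1
          have hnn : (0:ℝ) ≤ (nEdge v u : ℝ) * γ u :=
            mul_nonneg (Nat.cast_nonneg _) (hγ0 u).le
          have hγA : γ u ≤ A k v := le_trans (by nlinarith [hγ0 u]) hA
          nlinarith [mul_le_mul_of_nonneg_left hγA hnn]
      have hgI : ∀ u ∈ F (k-2), g u = 0 := by
        intro u hu
        refine Finset.sum_eq_zero fun v hv => ?_
        have hn : nEdge v u = 0 := by
          by_contra hc
          have h1 : 1 ≤ nEdge v u := Nat.one_le_iff_ne_zero.2 hc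
          have := hadjdist u v (by rw [hsymm]; exact h1)
          rw [hmemF] at hu
          exact hBfar k v hv (by omega)
        simp [hn]
      have hgB : ∀ u ∈ B k, g u = 0 := by
        intro u hu
        refine Finset.sum_eq_zero fun v hv => ?_
        rcases eq_or_ne v u with rfl | hne
        · simp [hloop]
        · have hn : nEdge v u = 0 := by
            by_contra hc
            have h1 : 1 ≤ nEdge v u := Nat.one_le_iff_ne_zero.2 hc
            have hAv : γ u ≤ A k v := by
              have := hsingle k v u (Finset.mem_filter.1 hu).1
              have hn1 : (1:ℝ) ≤ (nEdge v u : ℝ) := by exact_mod_cast h1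
              nlinarith [hγ0 u]
            have hAu : γ v ≤ A k u := by
              have := hsingle k u v (Finset.mem_filter.1 hv).1
              have hn1 : (1:ℝ) ≤ (nEdge u v : ℝ) := by
                rw [hsymm u v]; exact_mod_cast h1
              nlinarith [hγ0 v]
            have h2v : A k v < γ v := (Finset.mem_filter.1 hv).2
            have h2u : A k u < γ u := (Finset.mem_filter.1 hu).2
            linarith
          simp [hn]
      -- common estimate: g u ≤ γ u * S - mR * γ u ^ 2 with S the B-weighted sum
      have hgS : ∀ u ∈ F k, g u ≤ γ u * (∑ v ∈ B k, (nEdge u v : ℝ) * γ v)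
          - (∑ v ∈ B k, (nEdge u v : ℝ)) * γ u ^ 2 := by
        intro u hu
        rw [hgdef]
        calc ∑ v ∈ B k, (nEdge v u : ℝ) * γ u * (γ v - A k v)
            ≤ ∑ v ∈ B k, ((nEdge v u : ℝ) * γ u * γ v - (nEdge v u : ℝ) * γ u ^ 2) :=
              Finset.sum_le_sum fun v hv => htb u hu v hv
          _ = γ u * (∑ v ∈ B k, (nEdge u v : ℝ) * γ v)
              - (∑ v ∈ B k, (nEdge u v : ℝ)) * γ u ^ 2 := by
              rw [Finset.sum_sub_distrib, Finset.mul_sum, Finset.sum_mul]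
              congr 1
              · exact Finset.sum_congr rfl fun v _ => by rw [hsymm v u]; ring
              · exact Finset.sum_congr rfl fun v _ => by rw [hsymm v u]
      have hgM : ∀ u ∈ F (k-1) \ F (k-2), g u ≤ (δ - 1) * γ u ^ 2 := by
        intro u hu
        rw [Finset.mem_sdiff] at hu
        by_cases hz : ∀ v ∈ B k, nEdge u v = 0
        · have : g u = 0 := Finset.sum_eq_zero fun v hv => by
            rw [hsymm v u, hz v hv]; simp
          rw [this]
          nlinarith [sq_nonneg (γ u), hγ0 u, hγ u]
        · push_neg at hz
          obtain ⟨v₁, hv₁, hnv₁⟩ := hz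
          have hmR : (1:ℝ) ≤ ∑ v ∈ B k, (nEdge u v : ℝ) := by
            have h1 : (1:ℝ) ≤ (nEdge u v₁ : ℝ) := by
              exact_mod_cast Nat.one_le_iff_ne_zero.2 hnv₁
            calc (1:ℝ) ≤ (nEdge u v₁ : ℝ) := h1
              _ ≤ ∑ v ∈ B k, (nEdge u v : ℝ) :=
                Finset.single_le_sum (f := fun v => (nEdge u v : ℝ))
                  (fun i _ => Nat.cast_nonneg _) hv₁
          -- distance of u is exactly k-1 ≥ 1
          have hdu : G.dist v₀ u = k - 1 := by
            have h1 := (hmemF _ u).1 hu.1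
            have h2 : ¬ G.dist v₀ u ≤ k - 2 := fun hc => hu.2 ((hmemF _ u).2 hc)
            omega
          obtain ⟨w₀, hw₀n, hw₀d⟩ := hpred u (by omega)
          have hw₀F : w₀ ∈ F k := (hmemF _ _).2 (by omega)
          have hw₀B : w₀ ∉ B k := fun hc => hBfar k w₀ hc (by omega)
          have hAu : A k u = δ * γ u := hPFk k u (by omega)
          have hS : (∑ v ∈ B k, (nEdge u v : ℝ) * γ v) + 1 ≤ δ * γ u := by
            have hins : (nEdge u w₀ : ℝ) * γ w₀ + ∑ v ∈ B k, (nEdge u v : ℝ) * γ v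
                = ∑ v ∈ insert w₀ (B k), (nEdge u v : ℝ) * γ v :=
              (Finset.sum_insert (f := fun v => (nEdge u v : ℝ) * γ v) hw₀B).symm
            have hsub : insert w₀ (B k) ⊆ F k := by
              intro x hx
              rcases Finset.mem_insert.1 hx with rfl | hx
              · exact hw₀F
              · exact (Finset.mem_filter.1 hx).1
            have hle : ∑ v ∈ insert w₀ (B k), (nEdge u v : ℝ) * γ v ≤ A k u :=
              Finset.sum_le_sum_of_subset_of_nonneg hsub fun i _ _ => hterm u i
            have h1 : (1:ℝ) ≤ (nEdge u w₀ : ℝ) * γ w₀ := by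
              have : (1:ℝ) ≤ (nEdge u w₀ : ℝ) := by exact_mod_cast hw₀n
              nlinarith [hγ0 w₀, hγ w₀]
            rw [hAu] at hle
            linarith [hins ▸ hle]
          have := hgS u (hMF hu.1)
          nlinarith [hγ0 u, hγ u, sq_nonneg (γ u)]
      have hgC : ∀ u ∈ (F k \ F (k-1)) \ B k, g u ≤ γ u * (A k u - γ u) := by
        intro u hu
        rw [Finset.mem_sdiff, Finset.mem_sdiff] at hu
        have huF : u ∈ F k := hu.1.1
        have hAge : γ u ≤ A k u := by
          by_contra hc
          push_neg at hc
          exact hu.2 (Finset.mem_filter.2 ⟨huF, hc⟩)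
        by_cases hz : ∀ v ∈ B k, nEdge u v = 0
        · have : g u = 0 := Finset.sum_eq_zero fun v hv => by
            rw [hsymm v u, hz v hv]; simp
          rw [this]
          nlinarith [hγ0 u]
        · push_neg at hz
          obtain ⟨v₁, hv₁, hnv₁⟩ := hz
          have hmR : (1:ℝ) ≤ ∑ v ∈ B k, (nEdge u v : ℝ) := by
            have h1 : (1:ℝ) ≤ (nEdge u v₁ : ℝ) := by
              exact_mod_cast Nat.one_le_iff_ne_zero.2 hnv₁
            calc (1:ℝ) ≤ (nEdge u v₁ : ℝ) := h1
              _ ≤ ∑ v ∈ B k, (nEdge u v : ℝ) :=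
                Finset.single_le_sum (f := fun v => (nEdge u v : ℝ))
                  (fun i _ => Nat.cast_nonneg _) hv₁
          have hS : ∑ v ∈ B k, (nEdge u v : ℝ) * γ v ≤ A k u := by
            refine Finset.sum_le_sum_of_subset_of_nonneg ?_ fun i _ _ => hterm u i
            intro x hx; exact (Finset.mem_filter.1 hx).1
          have := hgS u huF
          nlinarith [hγ0 u, sq_nonneg (γ u)]
      calc ∑ v ∈ B k, A k v * (γ v - A k v)
          = ∑ u ∈ F k, g u := hexp
        _ = ∑ u ∈ F (k-2), g u + ∑ u ∈ F (k-1) \ F (k-2), g u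
            + ∑ u ∈ (F k \ F (k-1)) \ B k, g u + ∑ u ∈ B k, g u := hsplit g
        _ ≤ 0 + ∑ u ∈ F (k-1) \ F (k-2), (δ - 1) * γ u ^ 2
            + ∑ u ∈ (F k \ F (k-1)) \ B k, γ u * (A k u - γ u) + 0 := by
            gcongr ?_ + ?_ + ?_ + ?_
            · exact le_of_eq (Finset.sum_eq_zero hgI)
            · exact Finset.sum_le_sum hgM
            · exact Finset.sum_le_sum hgC
            · exact le_of_eq (Finset.sum_eq_zero hgB)
        _ = _ := by ring
    -- assemble
    have hQval : Q k = ∑ v ∈ F (k-2), (δ - 1) * γ v ^ 2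
        + ∑ v ∈ F (k-1) \ F (k-2), (δ - 1) * γ v ^ 2
        + ∑ v ∈ (F k \ F (k-1)) \ B k, γ v * (A k v - γ v)
        + ∑ v ∈ B k, -(A k v * (γ v - A k v)) := by
      rw [hQc, hsplit c]
      congr 1
      · congr 1
        · congr 1
          · exact Finset.sum_congr rfl fun v hv => hcI v (hIM hv)
          · exact Finset.sum_congr rfl fun v hv =>
              hcI v (Finset.mem_sdiff.1 hv).1
        · exact Finset.sum_congr rfl fun v hv => hcC v hv
      · exact Finset.sum_congr rfl fun v hv => hcB v hv
    have hI : (δ - 1) * ((F (k-2)).card : ℝ) ≤ ∑ v ∈ F (k-2), (δ - 1) * γ v ^ 2 := by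
      have h := Finset.card_nsmul_le_sum (F (k-2)) (fun v => (δ - 1) * γ v ^ 2) (δ - 1)
        (fun v _ => by
          show δ - 1 ≤ (δ - 1) * γ v ^ 2
          have h2 : (1:ℝ) ≤ γ v ^ 2 := by nlinarith [hγ v]
          have h3 := mul_le_mul_of_nonneg_left h2 (le_of_lt (sub_pos.2 hδ))
          linarith)
      rw [nsmul_eq_mul] at h
      linarith [h]
    have hneg : ∑ v ∈ B k, -(A k v * (γ v - A k v))
        = -∑ v ∈ B k, A k v * (γ v - A k v) := by
      simp
    have hC0 : (0:ℝ) ≤ ∑ v ∈ F (k-1) \ F (k-2), (δ - 1) * γ v ^ 2 := by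
      refine Finset.sum_nonneg fun v _ => ?_
      nlinarith [sq_nonneg (γ v)]
    rw [hQval, hneg]
    linarith [habs, hI]
  -- ball cardinalities tend to infinity
  have hmono : Monotone fun j => (F j).card := by
    intro i j hij
    exact Finset.card_le_card fun v hv => (hmemF j v).2 (le_trans ((hmemF i v).1 hv) hij)
  have hunbdd : ∀ n : ℕ, ∃ j, n ≤ (F j).card := by
    intro n
    obtain ⟨s, hs⟩ := Infinite.exists_subset_card_eq V n
    refine ⟨s.sup (G.dist v₀), ?_⟩
    rw [← hs]
    exact Finset.card_le_card fun v hv => (hmemF _ v).2 (Finset.le_sup hv)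
  have hcardtop : Filter.Tendsto (fun j => (F j).card) Filter.atTop Filter.atTop :=
    hmono.tendsto_atTop_atTop fun b => (hunbdd b).imp fun j h => h
  have hcast : Filter.Tendsto (fun j => ((F j).card : ℝ)) Filter.atTop Filter.atTop :=
    tendsto_natCast_atTop_atTop.comp hcardtop
  have hlow : Filter.Tendsto (fun k : ℕ => (δ - 1) * ((F (k-2)).card : ℝ))
      Filter.atTop Filter.atTop :=
    (hcast.comp (Filter.tendsto_sub_atTop_nat 2)).const_mul_atTop (by linarith)
  have hQtop : Filter.Tendsto Q Filter.atTop Filter.atTop := by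
    refine Filter.tendsto_atTop_mono' Filter.atTop ?_ hlow
    exact Filter.eventually_atTop.2 ⟨2, key⟩
  -- identify Q with the goal expression
  refine hQtop.congr fun k => ?_
  have h1 : ∀ f : V → ℝ, (∑ᶠ u ∈ {v | G.dist v₀ v ≤ k}, f u) = ∑ u ∈ F k, f u := by
    intro f
    rw [← (hball k).coe_toFinset, finsum_mem_coe_finset]
  have hAxy : ∀ v : V,
      (∑ᶠ w ∈ {u | G.dist v₀ u ≤ k}, (nEdge v w : ℝ) * γ w) = A k v := fun v => h1 _
  have e1 : (∑ᶠ u ∈ {v | G.dist v₀ v ≤ k}, ∑ᶠ w ∈ {v | G.dist v₀ v ≤ k},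
      (nEdge u w : ℝ) * γ u * γ w) = ∑ u ∈ F k, γ u * A k u := by
    rw [h1]
    refine Finset.sum_congr rfl fun u _ => ?_
    rw [h1, hAdef, Finset.mul_sum]
    exact Finset.sum_congr rfl fun w _ => by ring
  have e2 : (∑ᶠ u ∈ {v | G.dist v₀ v ≤ k}, γ u ^ 2) = ∑ u ∈ F k, γ u ^ 2 := h1 _
  have hBiff : ∀ v, v ∈ B k ↔ (G.dist v₀ v ≤ k ∧ A k v < γ v) := by
    intro v
    rw [hBdef]
    simp only [Finset.mem_filter, hmemF]
  have e3 : (∑ᶠ v ∈ {v | G.dist v₀ v ≤ k ∧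
        (∑ᶠ w ∈ {u | G.dist v₀ u ≤ k}, (nEdge v w : ℝ) * γ w) < γ v},
      (γ v - ∑ᶠ w ∈ {u | G.dist v₀ u ≤ k}, (nEdge v w : ℝ) * γ w) ^ 2)
      = ∑ v ∈ B k, (γ v - A k v) ^ 2 := by
    simp only [hAxy]
    have hset : {v | G.dist v₀ v ≤ k ∧ A k v < γ v} = ↑(B k) := by
      ext v
      simp only [Set.mem_setOf_eq, Finset.mem_coe, hBiff]
    rw [hset, finsum_mem_coe_finset]
  rw [e1, e2, e3, hQdef]
end
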